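/- arXiv:1601.02869 — 6 statements merged into one kernel-verified Lean document; each statement's English description precedes it below -/
import Mathlib

section
/- Let A be a closed bounded interval of length |A| and X : A → ℝ continuous with Lipschitz constant L. Then the sup norm of X is bounded: ‖X‖_∞ ≤ 2·max( |A|^{-1/2}·‖X‖₂ , L^{1/3}·‖X‖₂^{2/3} ), where ‖X‖₂ = (∫_A X(t)² dt)^{1/2}. -/
/-- Sup norm bound for a Lipschitz continuous function in terms of its L² norm:
`‖X‖_∞ ≤ 2 max(|A|^{-1/2} ‖X‖₂, L^{1/3} ‖X‖₂^{2/3})`. -/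
theorem sup_le_two_mul_max_L2_lipschitz
    (a b : ℝ) (hab : a < b) (X : ℝ → ℝ)
    (hX : ContinuousOn X (Set.Icc a b))
    (L : ℝ) (hL : 0 ≤ L)
    (hLip : ∀ s ∈ Set.Icc a b, ∀ t ∈ Set.Icc a b, |X s - X t| ≤ L * |s - t|) :
    ∀ t ∈ Set.Icc a b,
      |X t| ≤ 2 * max ((b - a) ^ (-(1:ℝ)/2) * (∫ u in a..b, X u ^ 2) ^ ((1:ℝ)/2))
        (L ^ ((1:ℝ)/3) * ((∫ u in a..b, X u ^ 2) ^ ((1:ℝ)/2)) ^ ((2:ℝ)/3)) := by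
  intro t ht
  set I := ∫ u in a..b, X u ^ 2 with hIdef
  have hba : (0:ℝ) < b - a := by linarith
  have hInt : IntervalIntegrable (fun u => X u ^ 2) MeasureTheory.volume a b := by
    apply ContinuousOn.intervalIntegrable
    rw [Set.uIcc_of_le hab.le]
    exact hX.pow 2
  have hI0 : 0 ≤ I :=
    intervalIntegral.integral_nonneg hab.le (fun u _ => sq_nonneg _)
  set M := |X t| with hMdef
  have hM0 : 0 ≤ M := abs_nonneg _
  have key : ∀ δ : ℝ, 0 ≤ δ → δ ≤ b - a → L * δ ≤ M / 2 → (M/2)^2 * δ ≤ I := by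
    intro δ hδ0 hδba hLδ
    set c := min t (b - δ) with hc
    have hac : a ≤ c := le_min ht.1 (by linarith)
    have hdb : c + δ ≤ b := by
      have : c ≤ b - δ := min_le_right _ _
      linarith
    have hct : c ≤ t := min_le_left _ _
    have htd : t ≤ c + δ := by
      have : t - δ ≤ c := le_min (by linarith) (by linarith [ht.2])
      linarith
    have hsub : Set.Icc c (c+δ) ⊆ Set.Icc a b := Set.Icc_subset_Icc hac hdb
    have hpt : ∀ u ∈ Set.Icc c (c+δ), (M/2)^2 ≤ X u ^ 2 := by
      intro u hu
      have h1 : |X u - X t| ≤ L * |u - t| := hLip u (hsub hu) t ht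
      have h2 : |u - t| ≤ δ := by
        rw [abs_le]
        constructor
        · linarith [hu.1]
        · linarith [hu.2]
      have h3 : M - |X u| ≤ |X t - X u| := by
        have := abs_sub_abs_le_abs_sub (X t) (X u)
        linarith
      have h4 : M / 2 ≤ |X u| := by
        have h5 : |X t - X u| = |X u - X t| := abs_sub_comm _ _
        have h6 : L * |u - t| ≤ L * δ := mul_le_mul_of_nonneg_left h2 hL
        linarith
      calc (M/2)^2 ≤ |X u|^2 := pow_le_pow_left₀ (by linarith) h4 2
        _ = X u ^ 2 := sq_abs _
    have hIntc : IntervalIntegrable (fun u => X u ^ 2) MeasureTheory.volume c (c+δ) :=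
      hInt.mono_set (by rw [Set.uIcc_of_le hab.le, Set.uIcc_of_le (by linarith : c ≤ c + δ)]; exact hsub)
    have hconst : ∫ _ in c..(c+δ), (M/2)^2 = (M/2)^2 * δ := by
      rw [intervalIntegral.integral_const, smul_eq_mul]; ring
    have step1 : (M/2)^2 * δ ≤ ∫ u in c..(c+δ), X u ^ 2 := by
      rw [← hconst]
      exact intervalIntegral.integral_mono_on (by linarith) intervalIntegrable_const hIntc hpt
    have step2 : (∫ u in c..(c+δ), X u ^ 2) ≤ I :=
      intervalIntegral.integral_mono_interval hac (by linarith) hdb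
        (MeasureTheory.ae_of_all _ fun x => sq_nonneg _) hInt
    linarith
  rcases le_or_gt (L * (b - a)) (M / 2) with hcase | hcase
  · -- first branch
    have h := key (b - a) hba.le le_rfl hcase
    have hA : M ≤ 2 * ((b - a) ^ (-(1:ℝ)/2) * I ^ ((1:ℝ)/2)) := by
      have e1 : (b - a) ^ (-(1:ℝ)/2) = (Real.sqrt (b - a))⁻¹ := by
        rw [neg_div, Real.rpow_neg hba.le, Real.sqrt_eq_rpow]
      have e2 : I ^ ((1:ℝ)/2) = Real.sqrt I := (Real.sqrt_eq_rpow I).symm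
      rw [e1, e2]
      have hs : 0 < Real.sqrt (b - a) := Real.sqrt_pos.mpr hba
      have hr : 0 ≤ Real.sqrt I := Real.sqrt_nonneg _
      have hs2 : Real.sqrt (b - a) ^ 2 = b - a := Real.sq_sqrt hba.le
      have hr2 : Real.sqrt I ^ 2 = I := Real.sq_sqrt hI0
      have hMs : M * Real.sqrt (b - a) ≤ 2 * Real.sqrt I := by
        rw [← pow_le_pow_iff_left₀ (by positivity) (by positivity) (two_ne_zero)]
        rw [mul_pow, mul_pow, hs2, hr2]
        nlinarith [h]
      calc M ≤ 2 * Real.sqrt I / Real.sqrt (b - a) := by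
              rw [le_div_iff₀ hs]; linarith
        _ = 2 * ((Real.sqrt (b - a))⁻¹ * Real.sqrt I) := by ring
    exact hA.trans (mul_le_mul_of_nonneg_left (le_max_left _ _) (by norm_num))
  · -- second branch
    rcases eq_or_lt_of_le hM0 with hM | hM
    · have hA : 0 ≤ (b - a) ^ (-(1:ℝ)/2) * I ^ ((1:ℝ)/2) :=
        mul_nonneg (Real.rpow_nonneg hba.le _) (Real.rpow_nonneg hI0 _)
      have : (0:ℝ) ≤ 2 * max ((b - a) ^ (-(1:ℝ)/2) * I ^ ((1:ℝ)/2))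
          (L ^ ((1:ℝ)/3) * (I ^ ((1:ℝ)/2)) ^ ((2:ℝ)/3)) := by
        have := le_max_left ((b - a) ^ (-(1:ℝ)/2) * I ^ ((1:ℝ)/2))
          (L ^ ((1:ℝ)/3) * (I ^ ((1:ℝ)/2)) ^ ((2:ℝ)/3))
        linarith
      linarith [hM.symm ▸ this]
    · have hL0 : 0 < L := by nlinarith
      have hδ0 : (0:ℝ) ≤ M / (2 * L) := by positivity
      have hδba : M / (2 * L) ≤ b - a := by
        rw [div_le_iff₀ (by positivity)]
        nlinarith
      have hLδ : L * (M / (2 * L)) ≤ M / 2 := by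
        rw [mul_div_assoc']
        rw [div_le_div_iff₀ (by positivity) (by norm_num)]
        ring_nf
        nlinarith
      have h := key (M / (2 * L)) hδ0 hδba hLδ
      have h3 : M ^ 3 ≤ 8 * L * I := by
        have h8 : (M/2)^2 * (M/(2*L)) = M^3 / (8*L) := by
          field_simp; ring
        rw [h8, div_le_iff₀ (by positivity)] at h
        linarith
      have hB : M ≤ 2 * (L ^ ((1:ℝ)/3) * (I ^ ((1:ℝ)/2)) ^ ((2:ℝ)/3)) := by
        have e3 : (I ^ ((1:ℝ)/2)) ^ ((2:ℝ)/3) = I ^ ((1:ℝ)/3) := by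
          rw [← Real.rpow_mul hI0]
          norm_num
        rw [e3]
        have hR0 : 0 ≤ 2 * (L ^ ((1:ℝ)/3) * I ^ ((1:ℝ)/3)) := by
          have := Real.rpow_nonneg hL ((1:ℝ)/3)
          have := Real.rpow_nonneg hI0 ((1:ℝ)/3)
          positivity
        rw [← pow_le_pow_iff_left₀ hM0 hR0 (three_ne_zero)]
        have hL3 : (L ^ ((1:ℝ)/3)) ^ (3:ℕ) = L := by
          rw [← Real.rpow_natCast (L ^ ((1:ℝ)/3)) 3, ← Real.rpow_mul hL]
          norm_num
        have hI3 : (I ^ ((1:ℝ)/3)) ^ (3:ℕ) = I := by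
          rw [← Real.rpow_natCast (I ^ ((1:ℝ)/3)) 3, ← Real.rpow_mul hI0]
          norm_num
        calc M ^ 3 ≤ 8 * L * I := h3
          _ = (2 * (L ^ ((1:ℝ)/3) * I ^ ((1:ℝ)/3))) ^ 3 := by
              rw [mul_pow, mul_pow, hL3, hI3]; ring
      exact hB.trans (mul_le_mul_of_nonneg_left (le_max_right _ _) (by norm_num))
end

section
/- The log hazard transformation ψ_H is Lipschitz in sup norm: for densities f, g as in the context and 0 < δ < 1, sup_{x∈[0,1-δ]} |ψ_H(f)(x) - ψ_H(g)(x)| ≤ D₀(1 + δ^{-1}) · sup_{x∈[0,1]} |f(x) - g(x)|, where ψ_H(f)(x) = log( f(x) / (1 - F(x)) ). -/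
lemma abs_log_sub_log_le_aux (a b c : ℝ) (hc : 0 < c) (ha : c ≤ a) (hb : c ≤ b) :
    |Real.log a - Real.log b| ≤ |a - b| / c := by
  wlog h : b ≤ a generalizing a b
  · rw [abs_sub_comm, abs_sub_comm a b]
    exact this b a hb ha (le_of_not_ge h)
  have ha0 : 0 < a := lt_of_lt_of_le hc ha
  have hb0 : 0 < b := lt_of_lt_of_le hc hb
  have hlog : Real.log b ≤ Real.log a := Real.log_le_log hb0 h
  rw [abs_of_nonneg (sub_nonneg.2 hlog), abs_of_nonneg (sub_nonneg.2 h),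
    ← Real.log_div ha0.ne' hb0.ne']
  calc Real.log (a / b) ≤ a / b - 1 := Real.log_le_sub_one_of_pos (div_pos ha0 hb0)
    _ = (a - b) / b := by field_simp
    _ ≤ (a - b) / c := by gcongr

/-- The log hazard transformation is Lipschitz in sup norm:
`sup_{[0,1-δ]} |ψ_H(f) - ψ_H(g)| ≤ D₀(1 + δ⁻¹) sup |f - g|`. -/
theorem log_hazard_sup_lipschitz
    (f g : ℝ → ℝ) (D₀ δ : ℝ) (hδ : 0 < δ) (hδ1 : δ < 1)
    (hfc : ContinuousOn f (Set.Icc 0 1)) (hgc : ContinuousOn g (Set.Icc 0 1))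
    (hfpos : ∀ x ∈ Set.Icc (0:ℝ) 1, 0 < f x) (hgpos : ∀ x ∈ Set.Icc (0:ℝ) 1, 0 < g x)
    (hf1 : (∫ x in (0:ℝ)..1, f x) = 1) (hg1 : (∫ x in (0:ℝ)..1, g x) = 1)
    (hD : ∀ x ∈ Set.Icc (0:ℝ) 1,
      f x ≤ D₀ ∧ (f x)⁻¹ ≤ D₀ ∧ g x ≤ D₀ ∧ (g x)⁻¹ ≤ D₀)
    (F G : ℝ → ℝ)
    (hF : ∀ x, F x = ∫ s in (0:ℝ)..x, f s) (hG : ∀ x, G x = ∫ s in (0:ℝ)..x, g s) :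
    ∀ x ∈ Set.Icc (0:ℝ) (1 - δ),
      |Real.log (f x / (1 - F x)) - Real.log (g x / (1 - G x))| ≤
        D₀ * (1 + δ⁻¹) * ⨆ y : Set.Icc (0:ℝ) 1, |f y.1 - g y.1| := by
  intro x hx
  have hD0pos : 0 < D₀ := lt_of_lt_of_le (hfpos 0 (by simp)) (hD 0 (by simp)).1
  have hx0 : (0:ℝ) ≤ x := hx.1
  have hx1 : x ≤ 1 - δ := hx.2
  have hx1' : x ≤ 1 := le_trans hx1 (by linarith)
  have hxI : x ∈ Set.Icc (0:ℝ) 1 := ⟨hx0, hx1'⟩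
  set M := ⨆ y : Set.Icc (0:ℝ) 1, |f y.1 - g y.1| with hM
  -- lower bounds on f, g
  have hflb : ∀ y ∈ Set.Icc (0:ℝ) 1, D₀⁻¹ ≤ f y := by
    intro y hy
    have h1 := (hD y hy).2.1
    have h2 := hfpos y hy
    rw [inv_le_comm₀ hD0pos h2]
    exact h1
  have hglb : ∀ y ∈ Set.Icc (0:ℝ) 1, D₀⁻¹ ≤ g y := by
    intro y hy
    have h1 := (hD y hy).2.2.2
    have h2 := hgpos y hy
    rw [inv_le_comm₀ hD0pos h2]
    exact h1
  -- M bounds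
  have hMbdd : BddAbove (Set.range fun y : Set.Icc (0:ℝ) 1 => |f y.1 - g y.1|) := by
    refine ⟨2 * D₀, ?_⟩
    rintro _ ⟨y, rfl⟩
    have h1 := (hD y.1 y.2).1
    have h2 := (hD y.1 y.2).2.2.1
    have h3 := hfpos y.1 y.2
    have h4 := hgpos y.1 y.2
    calc |f y.1 - g y.1| ≤ |f y.1| + |g y.1| := abs_sub _ _
      _ ≤ D₀ + D₀ := by
          rw [abs_of_pos h3, abs_of_pos h4]; linarith
      _ = 2 * D₀ := by ring
  have hMle : ∀ y ∈ Set.Icc (0:ℝ) 1, |f y - g y| ≤ M :=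
    fun y hy => le_ciSup hMbdd (⟨y, hy⟩ : Set.Icc (0:ℝ) 1)
  have hMnonneg : 0 ≤ M := le_trans (abs_nonneg _) (hMle 0 (by simp))
  -- integrability facts
  have hfi : ∀ a b : ℝ, a ∈ Set.Icc (0:ℝ) 1 → b ∈ Set.Icc (0:ℝ) 1 →
      IntervalIntegrable f MeasureTheory.volume a b := by
    intro a b ha hb
    exact (hfc.mono (Set.uIcc_subset_Icc ha hb)).intervalIntegrable
  have hgi : ∀ a b : ℝ, a ∈ Set.Icc (0:ℝ) 1 → b ∈ Set.Icc (0:ℝ) 1 →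
      IntervalIntegrable g MeasureTheory.volume a b := by
    intro a b ha hb
    exact (hgc.mono (Set.uIcc_subset_Icc ha hb)).intervalIntegrable
  -- 1 - F x = ∫ x..1 f
  have hFrest : 1 - F x = ∫ s in x..(1:ℝ), f s := by
    have := intervalIntegral.integral_add_adjacent_intervals
      (hfi 0 x (by simp) hxI) (hfi x 1 hxI (by simp))
    rw [hF x]; rw [hf1] at this; linarith
  have hGrest : 1 - G x = ∫ s in x..(1:ℝ), g s := by
    have := intervalIntegral.integral_add_adjacent_intervals
      (hgi 0 x (by simp) hxI) (hgi x 1 hxI (by simp))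
    rw [hG x]; rw [hg1] at this; linarith
  -- lower bound on tails: δ/D₀ ≤ 1 - F x
  have hδD : 0 < δ / D₀ := div_pos hδ hD0pos
  have htail : ∀ (h : ℝ → ℝ), (∀ y ∈ Set.Icc (0:ℝ) 1, D₀⁻¹ ≤ h y) →
      IntervalIntegrable h MeasureTheory.volume x 1 →
      δ / D₀ ≤ ∫ s in x..(1:ℝ), h s := by
    intro h hlb hint
    have hconst : (∫ s in x..(1:ℝ), (D₀⁻¹ : ℝ)) ≤ ∫ s in x..(1:ℝ), h s := by
      apply intervalIntegral.integral_mono_on hx1' intervalIntegrable_const hint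
      intro s hs
      exact hlb s ⟨le_trans hx0 hs.1, hs.2⟩
    rw [intervalIntegral.integral_const, smul_eq_mul] at hconst
    have : δ / D₀ ≤ (1 - x) * D₀⁻¹ := by
      rw [div_eq_mul_inv]
      have : δ ≤ 1 - x := by linarith
      exact mul_le_mul_of_nonneg_right this (inv_nonneg.2 hD0pos.le)
    linarith
  have hFlb : δ / D₀ ≤ 1 - F x := hFrest ▸ htail f hflb (hfi x 1 hxI (by simp))
  have hGlb : δ / D₀ ≤ 1 - G x := hGrest ▸ htail g hglb (hgi x 1 hxI (by simp))
  have hFpos : 0 < 1 - F x := lt_of_lt_of_le hδD hFlb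
  have hGpos : 0 < 1 - G x := lt_of_lt_of_le hδD hGlb
  have hfxpos := hfpos x hxI
  have hgxpos := hgpos x hxI
  -- |F x - G x| ≤ M
  have hFG : |F x - G x| ≤ M := by
    rw [hF x, hG x, ← intervalIntegral.integral_sub (hfi 0 x (by simp) hxI)
      (hgi 0 x (by simp) hxI)]
    have := intervalIntegral.norm_integral_le_of_norm_le_const (C := M)
      (f := fun s => f s - g s) (a := 0) (b := x) ?_
    · rw [Real.norm_eq_abs] at this
      calc |∫ s in (0:ℝ)..x, (f s - g s)| ≤ M * |x - 0| := this
        _ = M * x := by rw [sub_zero, abs_of_nonneg hx0]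
        _ ≤ M * 1 := mul_le_mul_of_nonneg_left hx1' hMnonneg
        _ = M := mul_one M
    · intro s hs
      rw [Set.uIoc_of_le hx0] at hs
      exact (Real.norm_eq_abs _) ▸ hMle s ⟨hs.1.le, le_trans hs.2 hx1'⟩
  -- split the logs
  rw [Real.log_div hfxpos.ne' hFpos.ne', Real.log_div hgxpos.ne' hGpos.ne']
  have key : |Real.log (f x) - Real.log (1 - F x) -
      (Real.log (g x) - Real.log (1 - G x))| ≤
      |Real.log (f x) - Real.log (g x)| +
      |Real.log (1 - F x) - Real.log (1 - G x)| := by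
    have : Real.log (f x) - Real.log (1 - F x) - (Real.log (g x) - Real.log (1 - G x)) =
        (Real.log (f x) - Real.log (g x)) -
        (Real.log (1 - F x) - Real.log (1 - G x)) := by ring
    rw [this]
    exact abs_sub _ _
  refine le_trans key ?_
  have h1 : |Real.log (f x) - Real.log (g x)| ≤ D₀ * M := by
    have := abs_log_sub_log_le_aux (f x) (g x) D₀⁻¹ (inv_pos.2 hD0pos)
      (hflb x hxI) (hglb x hxI)
    calc |Real.log (f x) - Real.log (g x)| ≤ |f x - g x| / D₀⁻¹ := this
      _ = D₀ * |f x - g x| := by rw [div_eq_mul_inv, inv_inv]; ring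
      _ ≤ D₀ * M := mul_le_mul_of_nonneg_left (hMle x hxI) hD0pos.le
  have h2 : |Real.log (1 - F x) - Real.log (1 - G x)| ≤ D₀ * δ⁻¹ * M := by
    have := abs_log_sub_log_le_aux (1 - F x) (1 - G x) (δ / D₀) hδD hFlb hGlb
    have heq : (1 - F x) - (1 - G x) = G x - F x := by ring
    calc |Real.log (1 - F x) - Real.log (1 - G x)|
        ≤ |(1 - F x) - (1 - G x)| / (δ / D₀) := this
      _ = |F x - G x| * (D₀ / δ) := by
          rw [heq, abs_sub_comm, div_div_eq_mul_div, div_eq_mul_inv, div_eq_mul_inv]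
          ring
      _ ≤ M * (D₀ / δ) := by
          exact mul_le_mul_of_nonneg_right hFG (div_nonneg hD0pos.le hδ.le)
      _ = D₀ * δ⁻¹ * M := by rw [div_eq_mul_inv]; ring
  calc |Real.log (f x) - Real.log (g x)| + |Real.log (1 - F x) - Real.log (1 - G x)|
      ≤ D₀ * M + D₀ * δ⁻¹ * M := add_le_add h1 h2
    _ = D₀ * (1 + δ⁻¹) * M := by ring
end

section
/- The log hazard transformation ψ_H satisfies the L² bound: d₂(ψ_H(f), ψ_H(g))² ≤ 2 D₀² (1 + δ^{-2}) · d₂(f,g)², where d₂ denotes the L² distance on [0,1-δ] on the left and on [0,1] on the right. -/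
open MeasureTheory intervalIntegral Set

lemma my_log_sub_le {a b c : ℝ} (hc : 0 < c) (ha : c ≤ a) (hb : c ≤ b) :
    Real.log a - Real.log b ≤ c⁻¹ * |a - b| := by
  have ha0 : 0 < a := hc.trans_le ha
  have hb0 : 0 < b := hc.trans_le hb
  have h1 : Real.log a - Real.log b = Real.log (a / b) :=
    (Real.log_div ha0.ne' hb0.ne').symm
  rw [h1]
  calc Real.log (a / b) ≤ a / b - 1 := Real.log_le_sub_one_of_pos (by positivity)
    _ = (a - b) / b := by field_simp
    _ ≤ |a - b| / b := by gcongr; exact le_abs_self _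
    _ ≤ |a - b| / c := by gcongr
    _ = c⁻¹ * |a - b| := by rw [div_eq_inv_mul]

lemma my_abs_log_sub_le {a b c : ℝ} (hc : 0 < c) (ha : c ≤ a) (hb : c ≤ b) :
    |Real.log a - Real.log b| ≤ c⁻¹ * |a - b| := by
  rw [abs_sub_le_iff]
  refine ⟨my_log_sub_le hc ha hb, ?_⟩
  rw [abs_sub_comm]
  exact my_log_sub_le hc hb ha

/-- Cauchy–Schwarz for interval integrals of continuous functions. -/
lemma my_cauchy_schwarz (h : ℝ → ℝ) {x : ℝ} (hx : 0 ≤ x) (hx1 : x ≤ 1)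
    (hcont : ContinuousOn h (Set.Icc 0 1)) :
    (∫ s in (0:ℝ)..x, h s) ^ 2 ≤ x * ∫ s in (0:ℝ)..x, (h s) ^ 2 := by
  rcases eq_or_lt_of_le hx with rfl | hx0
  · simp
  have hsub : Set.uIcc (0:ℝ) x ⊆ Set.Icc 0 1 :=
    Set.uIcc_subset_Icc ⟨le_refl _, zero_le_one⟩ ⟨hx, hx1⟩
  have hint : IntervalIntegrable h volume 0 x :=
    (hcont.mono hsub).intervalIntegrable
  have hint2 : IntervalIntegrable (fun s => (h s) ^ 2) volume 0 x :=
    (((hcont.mono hsub).pow 2)).intervalIntegrable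
  set J := ∫ s in (0:ℝ)..x, h s with hJ
  set K := ∫ s in (0:ℝ)..x, (h s) ^ 2 with hK
  set t := J / x with ht
  have key : (0:ℝ) ≤ ∫ s in (0:ℝ)..x, (h s - t) ^ 2 :=
    intervalIntegral.integral_nonneg hx (fun s _ => sq_nonneg _)
  have expand : (∫ s in (0:ℝ)..x, (h s - t) ^ 2)
      = K - 2 * t * J + t ^ 2 * x := by
    have e1 : ∀ s, (h s - t) ^ 2 = (h s) ^ 2 - (2 * t) * h s + t ^ 2 := by
      intro s; ring
    simp_rw [e1]
    rw [intervalIntegral.integral_add ((hint2.sub (hint.const_mul _)))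
        intervalIntegrable_const,
      intervalIntegral.integral_sub hint2 (hint.const_mul _),
      intervalIntegral.integral_const_mul, intervalIntegral.integral_const]
    simp [hJ, hK]
    ring
  rw [expand] at key
  have : 0 ≤ K - J ^ 2 / x := by
    have ht2 : t ^ 2 * x = J ^ 2 / x := by
      field_simp [ht]
      rw [ht]; field_simp
    have ht3 : 2 * t * J = 2 * (J ^ 2 / x) := by
      field_simp [ht]
      rw [ht]; field_simp
    rw [ht2, ht3] at key
    linarith
  have hxne : x ≠ 0 := ne_of_gt hx0
  calc J ^ 2 = x * (J ^ 2 / x) := by field_simp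
    _ ≤ x * K := by
        apply mul_le_mul_of_nonneg_left _ hx
        linarith

/-- L² bound for the log hazard transformation:
`d₂(ψ_H(f), ψ_H(g))² ≤ 2 D₀² (1 + δ⁻²) d₂(f,g)²`. -/
theorem log_hazard_L2_bound
    (f g : ℝ → ℝ) (D₀ δ : ℝ) (hδ : 0 < δ) (hδ1 : δ < 1)
    (hfc : ContinuousOn f (Set.Icc 0 1)) (hgc : ContinuousOn g (Set.Icc 0 1))
    (hfpos : ∀ x ∈ Set.Icc (0:ℝ) 1, 0 < f x) (hgpos : ∀ x ∈ Set.Icc (0:ℝ) 1, 0 < g x)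
    (hf1 : (∫ x in (0:ℝ)..1, f x) = 1) (hg1 : (∫ x in (0:ℝ)..1, g x) = 1)
    (hD : ∀ x ∈ Set.Icc (0:ℝ) 1,
      f x ≤ D₀ ∧ (f x)⁻¹ ≤ D₀ ∧ g x ≤ D₀ ∧ (g x)⁻¹ ≤ D₀)
    (F G : ℝ → ℝ)
    (hF : ∀ x, F x = ∫ s in (0:ℝ)..x, f s) (hG : ∀ x, G x = ∫ s in (0:ℝ)..x, g s) :
    (∫ x in (0:ℝ)..(1 - δ),
        (Real.log (f x / (1 - F x)) - Real.log (g x / (1 - G x))) ^ 2) ≤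
      2 * D₀ ^ 2 * (1 + δ⁻¹ ^ 2) * ∫ x in (0:ℝ)..1, (f x - g x) ^ 2 := by
  have h01 : (0:ℝ) ∈ Set.Icc (0:ℝ) 1 := ⟨le_refl _, zero_le_one⟩
  obtain ⟨hfD0, hfiD0, -, -⟩ := hD 0 h01
  have hf00 : 0 < f 0 := hfpos 0 h01
  have hD0pos : 0 < D₀ := lt_of_lt_of_le (by positivity) hfiD0
  have hD0ge1 : 1 ≤ D₀ := by
    have h1 := mul_le_mul hfD0 hfiD0 (by positivity) hD0pos.le
    have h2 := mul_inv_cancel₀ hf00.ne'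
    nlinarith [h1, h2]
  -- lower bounds on f, g
  have hfl : ∀ x ∈ Set.Icc (0:ℝ) 1, D₀⁻¹ ≤ f x := by
    intro x hx
    have h1 := (hD x hx).2.1
    have h2 := hfpos x hx
    rw [inv_le_comm₀ hD0pos h2]
    exact h1
  have hgl : ∀ x ∈ Set.Icc (0:ℝ) 1, D₀⁻¹ ≤ g x := by
    intro x hx
    have h1 := (hD x hx).2.2.2
    have h2 := hgpos x hx
    rw [inv_le_comm₀ hD0pos h2]
    exact h1
  -- integrability helpers
  have hsubI : ∀ {a b : ℝ}, a ∈ Set.Icc (0:ℝ) 1 → b ∈ Set.Icc (0:ℝ) 1 →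
      Set.uIcc a b ⊆ Set.Icc (0:ℝ) 1 := fun ha hb => Set.uIcc_subset_Icc ha hb
  have h1δ : (1 - δ) ∈ Set.Icc (0:ℝ) 1 := ⟨by linarith, by linarith⟩
  have h1I : (1:ℝ) ∈ Set.Icc (0:ℝ) 1 := ⟨zero_le_one, le_refl _⟩
  have hfint : ∀ {a b : ℝ}, a ∈ Set.Icc (0:ℝ) 1 → b ∈ Set.Icc (0:ℝ) 1 →
      IntervalIntegrable f volume a b := fun ha hb =>
    (hfc.mono (hsubI ha hb)).intervalIntegrable
  have hgint : ∀ {a b : ℝ}, a ∈ Set.Icc (0:ℝ) 1 → b ∈ Set.Icc (0:ℝ) 1 →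
      IntervalIntegrable g volume a b := fun ha hb =>
    (hgc.mono (hsubI ha hb)).intervalIntegrable
  -- lower bound on 1 - F and 1 - G
  have tail : ∀ (h : ℝ → ℝ), ContinuousOn h (Set.Icc 0 1) →
      (∀ x ∈ Set.Icc (0:ℝ) 1, D₀⁻¹ ≤ h x) → (∫ x in (0:ℝ)..1, h x) = 1 →
      ∀ x ∈ Set.Icc (0:ℝ) (1 - δ), δ * D₀⁻¹ ≤ 1 - ∫ s in (0:ℝ)..x, h s := by
    intro h hc hl h1 x hx
    have hxI : x ∈ Set.Icc (0:ℝ) 1 := ⟨hx.1, hx.2.trans (by linarith)⟩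
    have hx1 : x ≤ 1 := hxI.2
    have hadj : (∫ s in (0:ℝ)..x, h s) + (∫ s in x..1, h s) = ∫ s in (0:ℝ)..1, h s :=
      intervalIntegral.integral_add_adjacent_intervals
        ((hc.mono (hsubI h01 hxI)).intervalIntegrable)
        ((hc.mono (hsubI hxI h1I)).intervalIntegrable)
    have heq : 1 - (∫ s in (0:ℝ)..x, h s) = ∫ s in x..1, h s := by
      rw [h1] at hadj; linarith
    rw [heq]
    have hmono : (∫ s in x..1, (D₀⁻¹ : ℝ)) ≤ ∫ s in x..1, h s := by
      apply intervalIntegral.integral_mono_on hx1 intervalIntegrable_const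
        ((hc.mono (hsubI hxI h1I)).intervalIntegrable)
      intro s hs
      exact hl s ⟨hxI.1.trans hs.1, hs.2⟩
    have hconst : (∫ s in x..1, (D₀⁻¹ : ℝ)) = (1 - x) * D₀⁻¹ := by
      simp [smul_eq_mul]
    have hle : δ * D₀⁻¹ ≤ (1 - x) * D₀⁻¹ := by
      apply mul_le_mul_of_nonneg_right _ (by positivity)
      linarith [hx.2]
    rw [hconst] at hmono
    linarith
  have hFtail := tail f hfc hfl hf1
  have hGtail := tail g hgc hgl hg1
  have hδD0 : 0 < δ * D₀⁻¹ := by positivity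
  -- continuity of F and G
  have hFfun : F = fun x => ∫ s in (0:ℝ)..x, f s := funext hF
  have hGfun : G = fun x => ∫ s in (0:ℝ)..x, g s := funext hG
  have hFcont : ContinuousOn F (Set.Icc 0 1) := by
    rw [hFfun]
    have := intervalIntegral.continuousOn_primitive_interval
      (f := f) (μ := volume) (a := 0) (b := 1)
      ((hfc.mono (Set.uIcc_of_le zero_le_one).subset).integrableOn_compact
        isCompact_uIcc)
    simpa [Set.uIcc_of_le (zero_le_one' ℝ)] using this
  have hGcont : ContinuousOn G (Set.Icc 0 1) := by
    rw [hGfun]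
    have := intervalIntegral.continuousOn_primitive_interval
      (f := g) (μ := volume) (a := 0) (b := 1)
      ((hgc.mono (Set.uIcc_of_le zero_le_one).subset).integrableOn_compact
        isCompact_uIcc)
    simpa [Set.uIcc_of_le (zero_le_one' ℝ)] using this
  -- the L² distance
  set I : ℝ := ∫ x in (0:ℝ)..1, (f x - g x) ^ 2 with hI
  have hInonneg : 0 ≤ I :=
    intervalIntegral.integral_nonneg zero_le_one (fun s _ => sq_nonneg _)
  -- bound on (F x - G x)^2
  have hFG : ∀ x ∈ Set.Icc (0:ℝ) (1 - δ), (F x - G x) ^ 2 ≤ I := by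
    intro x hx
    have hxI : x ∈ Set.Icc (0:ℝ) 1 := ⟨hx.1, hx.2.trans (by linarith)⟩
    have hsub : F x - G x = ∫ s in (0:ℝ)..x, (f s - g s) := by
      rw [hF, hG, intervalIntegral.integral_sub (hfint h01 hxI) (hgint h01 hxI)]
    rw [hsub]
    have hcs := my_cauchy_schwarz (fun s => f s - g s) hxI.1 hxI.2
      (hfc.sub hgc)
    have hmono2 : (∫ s in (0:ℝ)..x, (f s - g s) ^ 2) ≤ I := by
      rw [hI]
      apply intervalIntegral.integral_mono_interval (le_refl (0:ℝ)) hxI.1 hxI.2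
      · filter_upwards with s using sq_nonneg _
      · exact (((hfc.sub hgc).pow 2).mono (hsubI h01 h1I)).intervalIntegrable
    have hK0 : 0 ≤ ∫ s in (0:ℝ)..x, (f s - g s) ^ 2 :=
      intervalIntegral.integral_nonneg hxI.1 (fun s _ => sq_nonneg _)
    nlinarith [hxI.2, hxI.1]
  -- pointwise bound
  have hpt : ∀ x ∈ Set.Icc (0:ℝ) (1 - δ),
      (Real.log (f x / (1 - F x)) - Real.log (g x / (1 - G x))) ^ 2 ≤
      2 * D₀ ^ 2 * (f x - g x) ^ 2 + 2 * (D₀ / δ) ^ 2 * I := by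
    intro x hx
    have hxI : x ∈ Set.Icc (0:ℝ) 1 := ⟨hx.1, hx.2.trans (by linarith)⟩
    have hfx := hfpos x hxI
    have hgx := hgpos x hxI
    have hFx : δ * D₀⁻¹ ≤ 1 - F x := by rw [hF]; exact hFtail x hx
    have hGx : δ * D₀⁻¹ ≤ 1 - G x := by rw [hG]; exact hGtail x hx
    have hFx0 : 0 < 1 - F x := hδD0.trans_le hFx
    have hGx0 : 0 < 1 - G x := hδD0.trans_le hGx
    rw [Real.log_div hfx.ne' hFx0.ne', Real.log_div hgx.ne' hGx0.ne']
    obtain ⟨A, hA⟩ : ∃ A, A = Real.log (f x) - Real.log (g x) := ⟨_, rfl⟩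
    obtain ⟨B, hB⟩ : ∃ B, B = Real.log (1 - F x) - Real.log (1 - G x) := ⟨_, rfl⟩
    have hAbound : |A| ≤ D₀ * |f x - g x| := by
      rw [hA]
      have := my_abs_log_sub_le (by positivity : (0:ℝ) < D₀⁻¹)
        (hfl x hxI) (hgl x hxI)
      simpa [inv_inv] using this
    have hBbound : |B| ≤ (D₀ / δ) * |F x - G x| := by
      rw [hB]
      have := my_abs_log_sub_le hδD0 hFx hGx
      have heq : (δ * D₀⁻¹)⁻¹ = D₀ / δ := by
        field_simp
      have habs : |(1 - F x) - (1 - G x)| = |F x - G x| := by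
        rw [show (1 - F x) - (1 - G x) = -(F x - G x) by ring, abs_neg]
      rw [heq, habs] at this
      exact this
    have hA2 : A ^ 2 ≤ D₀ ^ 2 * (f x - g x) ^ 2 := by
      calc A ^ 2 = |A| ^ 2 := (sq_abs A).symm
        _ ≤ (D₀ * |f x - g x|) ^ 2 := pow_le_pow_left₀ (abs_nonneg A) hAbound 2
        _ = D₀ ^ 2 * (f x - g x) ^ 2 := by rw [mul_pow, sq_abs]
    have hB2 : B ^ 2 ≤ (D₀ / δ) ^ 2 * I := by
      have h1 : B ^ 2 ≤ (D₀ / δ) ^ 2 * (F x - G x) ^ 2 := by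
        calc B ^ 2 = |B| ^ 2 := (sq_abs B).symm
          _ ≤ ((D₀ / δ) * |F x - G x|) ^ 2 := pow_le_pow_left₀ (abs_nonneg B) hBbound 2
          _ = (D₀ / δ) ^ 2 * (F x - G x) ^ 2 := by rw [mul_pow, sq_abs]
      have h2 := hFG x hx
      have h3 : (0:ℝ) ≤ (D₀ / δ) ^ 2 := by positivity
      calc B ^ 2 ≤ (D₀ / δ) ^ 2 * (F x - G x) ^ 2 := h1
        _ ≤ (D₀ / δ) ^ 2 * I := mul_le_mul_of_nonneg_left h2 h3
    have hshape : (Real.log (f x) - Real.log (1 - F x) -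
        (Real.log (g x) - Real.log (1 - G x))) = A - B := by
      rw [hA, hB]; ring
    rw [hshape]
    have h4 : (A - B) ^ 2 ≤ 2 * A ^ 2 + 2 * B ^ 2 := by nlinarith [sq_nonneg (A + B)]
    linarith
  -- integrate the pointwise bound
  have h1δnn : (0:ℝ) ≤ 1 - δ := by linarith
  -- continuity of LHS integrand on [0, 1-δ]
  have hIccsub : Set.Icc (0:ℝ) (1 - δ) ⊆ Set.Icc 0 1 :=
    Set.Icc_subset_Icc (le_refl _) (by linarith)
  have hLHScont : ContinuousOn
      (fun x => (Real.log (f x / (1 - F x)) - Real.log (g x / (1 - G x))) ^ 2)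
      (Set.Icc 0 (1 - δ)) := by
    have hf' : ContinuousOn f (Set.Icc 0 (1 - δ)) := hfc.mono hIccsub
    have hg' : ContinuousOn g (Set.Icc 0 (1 - δ)) := hgc.mono hIccsub
    have hF' : ContinuousOn (fun x => 1 - F x) (Set.Icc 0 (1 - δ)) :=
      continuousOn_const.sub (hFcont.mono hIccsub)
    have hG' : ContinuousOn (fun x => 1 - G x) (Set.Icc 0 (1 - δ)) :=
      continuousOn_const.sub (hGcont.mono hIccsub)
    have hFne : ∀ x ∈ Set.Icc (0:ℝ) (1 - δ), 1 - F x ≠ 0 := by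
      intro x hx
      have : δ * D₀⁻¹ ≤ 1 - F x := by rw [hF]; exact hFtail x hx
      exact (hδD0.trans_le this).ne'
    have hGne : ∀ x ∈ Set.Icc (0:ℝ) (1 - δ), 1 - G x ≠ 0 := by
      intro x hx
      have : δ * D₀⁻¹ ≤ 1 - G x := by rw [hG]; exact hGtail x hx
      exact (hδD0.trans_le this).ne'
    have hq1 : ContinuousOn (fun x => f x / (1 - F x)) (Set.Icc 0 (1 - δ)) :=
      hf'.div hF' hFne
    have hq2 : ContinuousOn (fun x => g x / (1 - G x)) (Set.Icc 0 (1 - δ)) :=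
      hg'.div hG' hGne
    have hl1 : ContinuousOn (fun x => Real.log (f x / (1 - F x)))
        (Set.Icc 0 (1 - δ)) := by
      apply ContinuousOn.log hq1
      intro x hx
      exact div_ne_zero (hfpos x (hIccsub hx)).ne' (hFne x hx)
    have hl2 : ContinuousOn (fun x => Real.log (g x / (1 - G x)))
        (Set.Icc 0 (1 - δ)) := by
      apply ContinuousOn.log hq2
      intro x hx
      exact div_ne_zero (hgpos x (hIccsub hx)).ne' (hGne x hx)
    exact (hl1.sub hl2).pow 2
  have hLHSint : IntervalIntegrable
      (fun x => (Real.log (f x / (1 - F x)) - Real.log (g x / (1 - G x))) ^ 2)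
      volume 0 (1 - δ) :=
    (hLHScont.mono (Set.uIcc_of_le h1δnn).subset).intervalIntegrable
  have hRHSint : IntervalIntegrable
      (fun x => 2 * D₀ ^ 2 * (f x - g x) ^ 2 + 2 * (D₀ / δ) ^ 2 * I)
      volume 0 (1 - δ) := by
    have hc1 : ContinuousOn
        (fun x => 2 * D₀ ^ 2 * (f x - g x) ^ 2 + 2 * (D₀ / δ) ^ 2 * I)
        (Set.Icc 0 1) :=
      (continuousOn_const.mul ((hfc.sub hgc).pow 2)).add continuousOn_const
    exact (hc1.mono (hsubI h01 h1δ)).intervalIntegrable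
  have hstep1 : (∫ x in (0:ℝ)..(1 - δ),
      (Real.log (f x / (1 - F x)) - Real.log (g x / (1 - G x))) ^ 2) ≤
      ∫ x in (0:ℝ)..(1 - δ), (2 * D₀ ^ 2 * (f x - g x) ^ 2 + 2 * (D₀ / δ) ^ 2 * I) := by
    apply intervalIntegral.integral_mono_on h1δnn hLHSint hRHSint
    exact hpt
  have hsplit : (∫ x in (0:ℝ)..(1 - δ),
      (2 * D₀ ^ 2 * (f x - g x) ^ 2 + 2 * (D₀ / δ) ^ 2 * I)) =
      2 * D₀ ^ 2 * (∫ x in (0:ℝ)..(1 - δ), (f x - g x) ^ 2) +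
      (1 - δ) * (2 * (D₀ / δ) ^ 2 * I) := by
    have hi1 : IntervalIntegrable (fun x => 2 * D₀ ^ 2 * (f x - g x) ^ 2)
        volume 0 (1 - δ) :=
      ((continuousOn_const.mul ((hfc.sub hgc).pow 2)).mono
        (hsubI h01 h1δ)).intervalIntegrable
    rw [intervalIntegral.integral_add hi1 intervalIntegrable_const,
      intervalIntegral.integral_const_mul, intervalIntegral.integral_const]
    simp [smul_eq_mul]
  have hmono3 : (∫ x in (0:ℝ)..(1 - δ), (f x - g x) ^ 2) ≤ I := by
    rw [hI]
    have h1δle : (1:ℝ) - δ ≤ 1 := by linarith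
    exact intervalIntegral.integral_mono_interval (le_refl (0:ℝ)) h1δnn
      h1δle (by filter_upwards with s using sq_nonneg _)
      ((((hfc.sub hgc).pow 2).mono (hsubI h01 h1I)).intervalIntegrable)
  have hDδ : (D₀ / δ) ^ 2 = D₀ ^ 2 * δ⁻¹ ^ 2 := by
    rw [div_pow, div_eq_mul_inv, inv_pow]
  have hD2 : (0:ℝ) < D₀ ^ 2 := by positivity
  have hδ2 : (0:ℝ) < δ⁻¹ ^ 2 := by positivity
  calc (∫ x in (0:ℝ)..(1 - δ),
      (Real.log (f x / (1 - F x)) - Real.log (g x / (1 - G x))) ^ 2)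
      ≤ 2 * D₀ ^ 2 * (∫ x in (0:ℝ)..(1 - δ), (f x - g x) ^ 2) +
        (1 - δ) * (2 * (D₀ / δ) ^ 2 * I) := by
        rw [← hsplit]; exact hstep1
    _ ≤ 2 * D₀ ^ 2 * I + 1 * (2 * (D₀ / δ) ^ 2 * I) := by
        have e1 : 2 * D₀ ^ 2 * (∫ x in (0:ℝ)..(1 - δ), (f x - g x) ^ 2) ≤
            2 * D₀ ^ 2 * I := mul_le_mul_of_nonneg_left hmono3 (by positivity)
        have e2 : (1 - δ) * (2 * (D₀ / δ) ^ 2 * I) ≤ 1 * (2 * (D₀ / δ) ^ 2 * I) :=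
          mul_le_mul_of_nonneg_right (by linarith) (by positivity)
        linarith
    _ = 2 * D₀ ^ 2 * (1 + δ⁻¹ ^ 2) * I := by
        rw [hDδ]; ring
end

section
/- The log quantile density transformation is Lipschitz in sup norm: for densities f, g with constant D₀ as in the context, sup_{t∈[0,1]} |ψ_Q(f)(t) - ψ_Q(g)(t)| ≤ D₀(D₀² + 1) · sup_{x∈[0,1]} |f(x) - g(x)|, where ψ_Q(f)(t) = -log f(F^{-1}(t)). -/
/-- The log quantile density transformation is Lipschitz in sup norm:
`sup |ψ_Q(f) - ψ_Q(g)| ≤ D₀(D₀² + 1) sup |f - g|`. -/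
theorem log_quantile_density_sup_lipschitz
    (f g : ℝ → ℝ) (D₀ : ℝ)
    (hf : ContDiffOn ℝ 1 f (Set.Icc 0 1)) (hgc : ContinuousOn g (Set.Icc 0 1))
    (hfpos : ∀ x ∈ Set.Icc (0:ℝ) 1, 0 < f x) (hgpos : ∀ x ∈ Set.Icc (0:ℝ) 1, 0 < g x)
    (hf1 : (∫ x in (0:ℝ)..1, f x) = 1) (hg1 : (∫ x in (0:ℝ)..1, g x) = 1)
    (hD : ∀ x ∈ Set.Icc (0:ℝ) 1,
      f x ≤ D₀ ∧ (f x)⁻¹ ≤ D₀ ∧ g x ≤ D₀ ∧ (g x)⁻¹ ≤ D₀ ∧ |deriv f x| ≤ D₀)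
    (F G Finv Ginv : ℝ → ℝ)
    (hF : ∀ x, F x = ∫ s in (0:ℝ)..x, f s) (hG : ∀ x, G x = ∫ s in (0:ℝ)..x, g s)
    (hFinv : ∀ t ∈ Set.Icc (0:ℝ) 1, Finv t ∈ Set.Icc (0:ℝ) 1 ∧ F (Finv t) = t)
    (hGinv : ∀ t ∈ Set.Icc (0:ℝ) 1, Ginv t ∈ Set.Icc (0:ℝ) 1 ∧ G (Ginv t) = t) :
    ∀ t ∈ Set.Icc (0:ℝ) 1,
      |(-Real.log (f (Finv t))) - (-Real.log (g (Ginv t)))| ≤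
        D₀ * (D₀ ^ 2 + 1) * ⨆ x : Set.Icc (0:ℝ) 1, |f x.1 - g x.1| := by
  intro t ht
  have h01 : (0:ℝ) ∈ Set.Icc (0:ℝ) 1 := ⟨le_rfl, zero_le_one⟩
  have hD0pos : 0 < D₀ :=
    lt_of_lt_of_le (inv_pos.2 (hfpos 0 h01)) (hD 0 h01).2.1
  obtain ⟨hamem, hFa⟩ := hFinv t ht
  obtain ⟨hbmem, hGb⟩ := hGinv t ht
  set a := Finv t with ha
  set b := Ginv t with hb
  set M := ⨆ x : Set.Icc (0:ℝ) 1, |f x.1 - g x.1| with hMdef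
  -- M is an upper bound
  have hbdd : BddAbove (Set.range fun x : Set.Icc (0:ℝ) 1 => |f x.1 - g x.1|) := by
    refine ⟨2 * D₀, ?_⟩
    rintro _ ⟨⟨x, hx⟩, rfl⟩
    have h1 := (hD x hx).1
    have h2 := (hD x hx).2.2.1
    have := (hfpos x hx)
    have := (hgpos x hx)
    rw [abs_sub_le_iff]
    constructor <;> linarith
  have hMle : ∀ x ∈ Set.Icc (0:ℝ) 1, |f x - g x| ≤ M := fun x hx =>
    le_ciSup hbdd (⟨x, hx⟩ : Set.Icc (0:ℝ) 1)
  have hMnonneg : 0 ≤ M := le_trans (abs_nonneg _) (hMle 0 h01)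
  -- continuity / integrability
  have hfc : ContinuousOn f (Set.Icc 0 1) := hf.continuousOn
  have hIcc : Set.Icc (0:ℝ) 1 = Set.uIcc (0:ℝ) 1 := (Set.uIcc_of_le zero_le_one).symm
  have hint : ∀ u v : ℝ, u ∈ Set.Icc (0:ℝ) 1 → v ∈ Set.Icc (0:ℝ) 1 →
      IntervalIntegrable f MeasureTheory.volume u v := by
    intro u v hu hv
    refine (hfc.mono ?_).intervalIntegrable
    rw [hIcc]; exact Set.uIcc_subset_uIcc (hIcc ▸ hu) (hIcc ▸ hv)
  have hintg : ∀ u v : ℝ, u ∈ Set.Icc (0:ℝ) 1 → v ∈ Set.Icc (0:ℝ) 1 →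
      IntervalIntegrable g MeasureTheory.volume u v := by
    intro u v hu hv
    refine (hgc.mono ?_).intervalIntegrable
    rw [hIcc]; exact Set.uIcc_subset_uIcc (hIcc ▸ hu) (hIcc ▸ hv)
  -- |F x - G x| ≤ M on [0,1]
  have hFG : ∀ x ∈ Set.Icc (0:ℝ) 1, |F x - G x| ≤ M := by
    intro x hx
    have hsub : F x - G x = ∫ s in (0:ℝ)..x, (f s - g s) := by
      rw [hF, hG, intervalIntegral.integral_sub (hint 0 x h01 hx) (hintg 0 x h01 hx)]
    rw [hsub]
    have hb : ∀ s ∈ Set.uIoc (0:ℝ) x, ‖f s - g s‖ ≤ M := by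
      intro s hs
      have hs' : s ∈ Set.Icc (0:ℝ) 1 := by
        have : Set.uIoc (0:ℝ) x ⊆ Set.Icc (0:ℝ) 1 := by
          refine Set.Subset.trans Set.uIoc_subset_uIcc ?_
          rw [hIcc]; exact Set.uIcc_subset_uIcc (hIcc ▸ h01) (hIcc ▸ hx)
        exact this hs
      exact hMle s hs'
    calc ‖∫ s in (0:ℝ)..x, (f s - g s)‖ ≤ M * |x - 0| :=
          intervalIntegral.norm_integral_le_of_norm_le_const hb
      _ ≤ M * 1 := by
          apply mul_le_mul_of_nonneg_left _ hMnonneg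
          rw [sub_zero, abs_of_nonneg hx.1]; exact hx.2
      _ = M := mul_one M
  -- lower Lipschitz bound for F
  have hkey : ∀ u v : ℝ, u ∈ Set.Icc (0:ℝ) 1 → v ∈ Set.Icc (0:ℝ) 1 → u ≤ v →
      v - u ≤ D₀ * |F v - F u| := by
    intro u v hu hv huv
    have hdiff : F v - F u = ∫ s in u..v, f s := by
      rw [hF, hF]
      rw [← intervalIntegral.integral_add_adjacent_intervals (hint 0 u h01 hu) (hint u v hu hv)]
      ring
    have hlow : (v - u) * D₀⁻¹ ≤ ∫ s in u..v, f s := by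
      have : ∫ s in u..v, (D₀⁻¹ : ℝ) ≤ ∫ s in u..v, f s := by
        apply intervalIntegral.integral_mono_on huv intervalIntegrable_const (hint u v hu hv)
        intro x hx
        have hx' : x ∈ Set.Icc (0:ℝ) 1 := ⟨le_trans hu.1 hx.1, le_trans hx.2 hv.2⟩
        have h2 := (hD x hx').2.1
        have hfx := hfpos x hx'
        rw [inv_le_comm₀ hfx hD0pos] at h2
        · exact h2
      simpa using this
    have hpos : 0 ≤ ∫ s in u..v, f s :=
      le_trans (mul_nonneg (by linarith) (by positivity)) hlow
    rw [hdiff, abs_of_nonneg hpos]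
    calc v - u = D₀ * ((v - u) * D₀⁻¹) := by field_simp
      _ ≤ D₀ * ∫ s in u..v, f s := by
          apply mul_le_mul_of_nonneg_left hlow (le_of_lt hD0pos)
  -- |a - b| ≤ D₀ * M
  have hab : |a - b| ≤ D₀ * M := by
    have hFaFb : |F a - F b| = |F b - G b| := by
      rw [hFa, ← hGb, abs_sub_comm]
    rcases le_total a b with h | h
    · have := hkey a b hamem hbmem h
      rw [abs_sub_comm] at hFaFb
      rw [abs_of_nonpos (by linarith), neg_sub]
      calc b - a ≤ D₀ * |F b - F a| := this
        _ = D₀ * |F b - G b| := by rw [hFaFb]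
        _ ≤ D₀ * M := mul_le_mul_of_nonneg_left (hFG b hbmem) (le_of_lt hD0pos)
    · have := hkey b a hbmem hamem h
      rw [abs_of_nonneg (by linarith)]
      calc a - b ≤ D₀ * |F a - F b| := this
        _ = D₀ * |F b - G b| := by rw [hFaFb]
        _ ≤ D₀ * M := mul_le_mul_of_nonneg_left (hFG b hbmem) (le_of_lt hD0pos)
  -- derivative bound within
  have hderivW : ∀ x ∈ Set.Icc (0:ℝ) 1, |derivWithin f (Set.Icc 0 1) x| ≤ D₀ := by
    have hIoo : ∀ x ∈ Set.Ioo (0:ℝ) 1, |derivWithin f (Set.Icc 0 1) x| ≤ D₀ := by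
      intro x hx
      have hnhds : Set.Icc (0:ℝ) 1 ∈ nhds x := Icc_mem_nhds hx.1 hx.2
      have hdiffAt : DifferentiableAt ℝ f x :=
        ((hf.differentiableOn one_ne_zero) x (Set.Ioo_subset_Icc_self hx)).differentiableAt hnhds
      rw [derivWithin_of_mem_nhds hnhds]
      exact (hD x (Set.Ioo_subset_Icc_self hx)).2.2.2.2
    intro x hx
    have hcontD : ContinuousOn (derivWithin f (Set.Icc 0 1)) (Set.Icc 0 1) :=
      hf.continuousOn_derivWithin (uniqueDiffOn_Icc zero_lt_one) le_rfl
    have hxcl : x ∈ closure (Set.Ioo (0:ℝ) 1) := by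
      rw [closure_Ioo (by norm_num : (0:ℝ) ≠ 1)]; exact hx
    have hne : Filter.NeBot (nhdsWithin x (Set.Ioo (0:ℝ) 1)) :=
      mem_closure_iff_nhdsWithin_neBot.mp hxcl
    have htend : Filter.Tendsto (fun y => |derivWithin f (Set.Icc 0 1) y|)
        (nhdsWithin x (Set.Ioo (0:ℝ) 1)) (nhds |derivWithin f (Set.Icc 0 1) x|) := by
      have := (hcontD x hx).mono Set.Ioo_subset_Icc_self
      exact (continuous_abs.tendsto _).comp this
    exact le_of_tendsto htend
      (Filter.eventually_of_mem self_mem_nhdsWithin fun y hy => hIoo y hy)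
  -- MVT
  have hfab : |f a - f b| ≤ D₀ * |a - b| := by
    have := Convex.norm_image_sub_le_of_norm_derivWithin_le (hf.differentiableOn one_ne_zero)
      (fun x hx => hderivW x hx) (convex_Icc 0 1) hbmem hamem
    simpa [Real.norm_eq_abs] using this
  -- log Lipschitz
  have hloglip : ∀ u v : ℝ, D₀⁻¹ ≤ u → D₀⁻¹ ≤ v →
      |Real.log u - Real.log v| ≤ D₀ * |u - v| := by
    have key : ∀ u v : ℝ, D₀⁻¹ ≤ v → v ≤ u → Real.log u - Real.log v ≤ D₀ * (u - v) := by
      intro u v hv hvu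
      have hv0 : 0 < v := lt_of_lt_of_le (inv_pos.2 hD0pos) hv
      have hu0 : 0 < u := lt_of_lt_of_le hv0 hvu
      have h1 : Real.log u - Real.log v = Real.log (u / v) := by
        rw [Real.log_div (ne_of_gt hu0) (ne_of_gt hv0)]
      have h2 : Real.log (u / v) ≤ u / v - 1 :=
        Real.log_le_sub_one_of_pos (div_pos hu0 hv0)
      have h3 : u / v - 1 = (u - v) / v := by field_simp
      have h4 : (u - v) / v ≤ D₀ * (u - v) := by
        rw [div_le_iff₀ hv0]
        have : 1 ≤ D₀ * v := by
          nlinarith [mul_le_mul_of_nonneg_left hv hD0pos.le, mul_inv_cancel₀ (ne_of_gt hD0pos)]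
        nlinarith [sub_nonneg.2 hvu]
      linarith [h1 ▸ h2, h3 ▸ h4]
    intro u v hu hv
    rcases le_total v u with h | h
    · rw [abs_of_nonneg (sub_nonneg.2 (Real.log_le_log (lt_of_lt_of_le (inv_pos.2 hD0pos) hv) h)),
        abs_of_nonneg (sub_nonneg.2 h)]
      exact key u v hv h
    · rw [abs_sub_comm, abs_sub_comm u v,
        abs_of_nonneg (sub_nonneg.2 (Real.log_le_log (lt_of_lt_of_le (inv_pos.2 hD0pos) hu) h)),
        abs_of_nonneg (sub_nonneg.2 h)]
      exact key v u hu h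
  -- finish
  have hfa_lb : D₀⁻¹ ≤ f a := by
    have := (hD a hamem).2.1
    rw [inv_le_comm₀ (hfpos a hamem) hD0pos] at this
    exact this
  have hgb_lb : D₀⁻¹ ≤ g b := by
    have := (hD b hbmem).2.2.2.1
    rw [inv_le_comm₀ (hgpos b hbmem) hD0pos] at this
    exact this
  have h1 : |(-Real.log (f a)) - (-Real.log (g b))| = |Real.log (f a) - Real.log (g b)| := by
    rw [← abs_neg]; ring_nf
  have h2 : |Real.log (f a) - Real.log (g b)| ≤ D₀ * |f a - g b| := hloglip _ _ hfa_lb hgb_lb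
  have h3 : |f a - g b| ≤ |f a - f b| + |f b - g b| := abs_sub_le _ _ _
  have h4 : |f b - g b| ≤ M := hMle b hbmem
  have h5 : |f a - f b| ≤ D₀ * (D₀ * M) :=
    le_trans hfab (mul_le_mul_of_nonneg_left hab (le_of_lt hD0pos))
  calc |(-Real.log (f a)) - (-Real.log (g b))| = |Real.log (f a) - Real.log (g b)| := h1
    _ ≤ D₀ * |f a - g b| := h2
    _ ≤ D₀ * (D₀ * (D₀ * M) + M) := by
        apply mul_le_mul_of_nonneg_left _ (le_of_lt hD0pos)
        linarith
    _ = D₀ * (D₀ ^ 2 + 1) * M := by ring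
end

section
/- Let X be a continuous function on [0,1], θ_X = ∫₀¹ e^{X(s)} ds. Then θ_X^{-1} ≤ e^{‖X‖_∞}, and for another continuous function Y with θ_Y = ∫₀¹ e^{Y(s)} ds, |θ_X - θ_Y| ≤ e^{‖X‖_∞ + d_∞(X,Y)} d₂(X,Y), and consequently for the normalized quantile functions F^{-1}(t) = θ_X^{-1}∫₀ᵗ e^{X(s)} ds and G^{-1}(t) = θ_Y^{-1}∫₀ᵗ e^{Y(s)} ds one has sup_{t∈[0,1]} |F^{-1}(t) - G^{-1}(t)| ≤ 2 e^{2‖X‖_∞ + d_∞(X,Y)} d₂(X,Y). -/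
private lemma exp_sub_exp_le (a b : ℝ) :
    |Real.exp a - Real.exp b| ≤ |a - b| * Real.exp (max a b) := by
  wlog h : b ≤ a with H
  · have := H b a (le_of_not_ge h)
    rwa [abs_sub_comm, abs_sub_comm b a, max_comm] at this
  rw [abs_of_nonneg (sub_nonneg.2 (Real.exp_le_exp.2 h)), abs_of_nonneg (sub_nonneg.2 h),
    max_eq_left h]
  have h1 : (b - a) + 1 ≤ Real.exp (b - a) := Real.add_one_le_exp _
  have h2 : Real.exp b = Real.exp a * Real.exp (b - a) := by
    rw [← Real.exp_add]; ring_nf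
  nlinarith [Real.exp_pos a]

private lemma l1_le_l2 (f : ℝ → ℝ) (hf : ContinuousOn f (Set.Icc 0 1)) :
    ∫ s in (0:ℝ)..1, |f s| ≤ (∫ s in (0:ℝ)..1, f s ^ 2) ^ ((1:ℝ)/2) := by
  have hI : Set.uIcc (0:ℝ) 1 = Set.Icc 0 1 := Set.uIcc_of_le zero_le_one
  have h1 : IntervalIntegrable (fun s => |f s|) MeasureTheory.volume 0 1 :=
    ContinuousOn.intervalIntegrable (by rw [hI]; exact hf.abs)
  have h2 : IntervalIntegrable (fun s => f s ^ 2) MeasureTheory.volume 0 1 :=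
    ContinuousOn.intervalIntegrable (by rw [hI]; exact hf.pow 2)
  set I := ∫ s in (0:ℝ)..1, |f s| with hIdef
  set J := ∫ s in (0:ℝ)..1, f s ^ 2 with hJdef
  have hI0 : 0 ≤ I := intervalIntegral.integral_nonneg zero_le_one fun x _ => abs_nonneg _
  have hJ0 : 0 ≤ J := intervalIntegral.integral_nonneg zero_le_one fun x _ => sq_nonneg _
  have expand : ∀ s : ℝ, (|f s| - I) ^ 2 = f s ^ 2 - 2 * I * |f s| + I ^ 2 := by
    intro s; rw [← sq_abs (f s)]; ring
  have key : (0:ℝ) ≤ J - I ^ 2 := by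
    have h3 : (0:ℝ) ≤ ∫ s in (0:ℝ)..1, (|f s| - I) ^ 2 :=
      intervalIntegral.integral_nonneg zero_le_one fun x _ => sq_nonneg _
    have h4 : (∫ s in (0:ℝ)..1, (|f s| - I) ^ 2) = J - I ^ 2 := by
      simp_rw [expand]
      rw [intervalIntegral.integral_add (h2.sub (h1.const_mul _)) intervalIntegrable_const,
        intervalIntegral.integral_sub h2 (h1.const_mul _),
        intervalIntegral.integral_const_mul, intervalIntegral.integral_const]
      simp [← hIdef, ← hJdef]
      ring
    linarith [h4 ▸ h3]
  rw [← Real.sqrt_eq_rpow]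
  exact (Real.le_sqrt hI0 hJ0).2 (by linarith)

/-- Continuity estimates for the inverse log quantile density map:
bounds on `θ_X⁻¹`, `|θ_X - θ_Y|` and on the normalized quantile functions. -/
theorem inverse_lqd_continuity
    (X Y : ℝ → ℝ)
    (hX : ContinuousOn X (Set.Icc 0 1)) (hY : ContinuousOn Y (Set.Icc 0 1)) :
    (∫ s in (0:ℝ)..1, Real.exp (X s))⁻¹ ≤ Real.exp (⨆ t : Set.Icc (0:ℝ) 1, |X t.1|) ∧
    |(∫ s in (0:ℝ)..1, Real.exp (X s)) - ∫ s in (0:ℝ)..1, Real.exp (Y s)| ≤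
      Real.exp ((⨆ t : Set.Icc (0:ℝ) 1, |X t.1|) + ⨆ t : Set.Icc (0:ℝ) 1, |X t.1 - Y t.1|) *
        (∫ s in (0:ℝ)..1, (X s - Y s) ^ 2) ^ ((1:ℝ)/2) ∧
    ∀ t ∈ Set.Icc (0:ℝ) 1,
      |(∫ s in (0:ℝ)..1, Real.exp (X s))⁻¹ * (∫ s in (0:ℝ)..t, Real.exp (X s)) -
          (∫ s in (0:ℝ)..1, Real.exp (Y s))⁻¹ * (∫ s in (0:ℝ)..t, Real.exp (Y s))| ≤
        2 * Real.exp (2 * (⨆ u : Set.Icc (0:ℝ) 1, |X u.1|) +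
            ⨆ u : Set.Icc (0:ℝ) 1, |X u.1 - Y u.1|) *
          (∫ s in (0:ℝ)..1, (X s - Y s) ^ 2) ^ ((1:ℝ)/2) := by
  have hI : Set.uIcc (0:ℝ) 1 = Set.Icc 0 1 := Set.uIcc_of_le zero_le_one
  set M := ⨆ t : Set.Icc (0:ℝ) 1, |X t.1| with hMdef
  set D := ⨆ t : Set.Icc (0:ℝ) 1, |X t.1 - Y t.1| with hDdef
  -- boundedness
  obtain ⟨C₁, hC₁⟩ := isCompact_Icc.exists_bound_of_continuousOn hX
  obtain ⟨C₂, hC₂⟩ := isCompact_Icc.exists_bound_of_continuousOn (hX.sub hY)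
  have hbM : BddAbove (Set.range fun t : Set.Icc (0:ℝ) 1 => |X t.1|) :=
    ⟨C₁, by rintro _ ⟨t, rfl⟩; exact hC₁ t t.2⟩
  have hbD : BddAbove (Set.range fun t : Set.Icc (0:ℝ) 1 => |X t.1 - Y t.1|) :=
    ⟨C₂, by rintro _ ⟨t, rfl⟩; exact hC₂ t t.2⟩
  have hM : ∀ s ∈ Set.Icc (0:ℝ) 1, |X s| ≤ M := fun s hs => le_ciSup hbM ⟨s, hs⟩
  have hD : ∀ s ∈ Set.Icc (0:ℝ) 1, |X s - Y s| ≤ D := fun s hs => le_ciSup hbD ⟨s, hs⟩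
  have hD0 : 0 ≤ D := le_trans (abs_nonneg _) (hD 0 ⟨le_refl 0, zero_le_one⟩)
  -- integrabilities
  have hIeX : IntervalIntegrable (fun s => Real.exp (X s)) MeasureTheory.volume 0 1 :=
    ContinuousOn.intervalIntegrable (by rw [hI]; exact Real.continuous_exp.comp_continuousOn hX)
  have hIeY : IntervalIntegrable (fun s => Real.exp (Y s)) MeasureTheory.volume 0 1 :=
    ContinuousOn.intervalIntegrable (by rw [hI]; exact Real.continuous_exp.comp_continuousOn hY)
  have hIabs : IntervalIntegrable (fun s => |X s - Y s|) MeasureTheory.volume 0 1 :=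
    ContinuousOn.intervalIntegrable (by rw [hI]; exact (hX.sub hY).abs)
  set θX := ∫ s in (0:ℝ)..1, Real.exp (X s) with hθXdef
  set θY := ∫ s in (0:ℝ)..1, Real.exp (Y s) with hθYdef
  set J := (∫ s in (0:ℝ)..1, (X s - Y s) ^ 2) ^ ((1:ℝ)/2) with hJdef
  have hJ0 : (0:ℝ) ≤ J :=
    Real.rpow_nonneg (intervalIntegral.integral_nonneg zero_le_one fun x _ => sq_nonneg _) _
  have hJle : ∫ s in (0:ℝ)..1, |X s - Y s| ≤ J := l1_le_l2 _ (hX.sub hY)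
  -- part 1
  have hlow : Real.exp (-M) ≤ θX := by
    have := intervalIntegral.integral_mono_on zero_le_one intervalIntegrable_const hIeX
      (fun x hx => Real.exp_le_exp.2 (le_trans (neg_le_neg (hM x hx)) (neg_abs_le _)))
    simpa using this
  have hθXpos : 0 < θX := lt_of_lt_of_le (Real.exp_pos _) hlow
  have part1 : θX⁻¹ ≤ Real.exp M := by
    have h := inv_anti₀ (Real.exp_pos (-M)) hlow
    rwa [← Real.exp_neg, neg_neg] at h
  -- pointwise exp bound
  have hpt : ∀ s ∈ Set.Icc (0:ℝ) 1,
      |Real.exp (X s) - Real.exp (Y s)| ≤ Real.exp (M + D) * |X s - Y s| := by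
    intro s hs
    have h1 := exp_sub_exp_le (X s) (Y s)
    have hXM : X s ≤ M := le_of_abs_le (hM s hs)
    have hYM : Y s ≤ M + D := by
      have := le_of_abs_le (abs_sub_comm (X s) (Y s) ▸ hD s hs)
      linarith
    have hmax : max (X s) (Y s) ≤ M + D := max_le (by linarith) hYM
    calc |Real.exp (X s) - Real.exp (Y s)| ≤ |X s - Y s| * Real.exp (max (X s) (Y s)) := h1
      _ ≤ |X s - Y s| * Real.exp (M + D) :=
        mul_le_mul_of_nonneg_left (Real.exp_le_exp.2 hmax) (abs_nonneg _)
      _ = Real.exp (M + D) * |X s - Y s| := mul_comm _ _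
  -- part 2
  have part2 : |θX - θY| ≤ Real.exp (M + D) * J := by
    have habsint : IntervalIntegrable (fun s => |Real.exp (X s) - Real.exp (Y s)|)
        MeasureTheory.volume 0 1 := (hIeX.sub hIeY).abs
    calc |θX - θY| = |∫ s in (0:ℝ)..1, (Real.exp (X s) - Real.exp (Y s))| := by
          rw [intervalIntegral.integral_sub hIeX hIeY]
      _ ≤ ∫ s in (0:ℝ)..1, |Real.exp (X s) - Real.exp (Y s)| :=
          intervalIntegral.abs_integral_le_integral_abs zero_le_one
      _ ≤ ∫ s in (0:ℝ)..1, Real.exp (M + D) * |X s - Y s| :=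
          intervalIntegral.integral_mono_on zero_le_one habsint (hIabs.const_mul _) hpt
      _ = Real.exp (M + D) * ∫ s in (0:ℝ)..1, |X s - Y s| :=
          intervalIntegral.integral_const_mul _ _
      _ ≤ Real.exp (M + D) * J :=
          mul_le_mul_of_nonneg_left hJle (Real.exp_pos _).le
  refine ⟨part1, part2, ?_⟩
  -- part 3
  intro t ht
  obtain ⟨ht0, ht1⟩ := ht
  have hsub : Set.uIcc (0:ℝ) t ⊆ Set.uIcc (0:ℝ) 1 := by
    rw [hI, Set.uIcc_of_le ht0]
    exact Set.Icc_subset_Icc le_rfl ht1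
  have hIeXt : IntervalIntegrable (fun s => Real.exp (X s)) MeasureTheory.volume 0 t :=
    hIeX.mono_set hsub
  have hIeYt : IntervalIntegrable (fun s => Real.exp (Y s)) MeasureTheory.volume 0 t :=
    hIeY.mono_set hsub
  set At := ∫ s in (0:ℝ)..t, Real.exp (X s) with hAtdef
  set Bt := ∫ s in (0:ℝ)..t, Real.exp (Y s) with hBtdef
  have hθYpos : 0 < θY := by
    apply intervalIntegral.integral_pos zero_lt_one
    · exact Real.continuous_exp.comp_continuousOn hY
    · exact fun x _ => (Real.exp_pos _).le
    · exact ⟨0, ⟨le_rfl, zero_le_one⟩, Real.exp_pos _⟩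
  have hBt0 : 0 ≤ Bt :=
    intervalIntegral.integral_nonneg ht0 fun x _ => (Real.exp_pos _).le
  have hBtle : Bt ≤ θY :=
    intervalIntegral.integral_mono_interval le_rfl ht0 ht1
      (Filter.Eventually.of_forall fun x => (Real.exp_pos _).le) hIeY
  -- bound |At - Bt|
  have hAB : |At - Bt| ≤ Real.exp (M + D) * J := by
    have habsintt : IntervalIntegrable (fun s => |Real.exp (X s) - Real.exp (Y s)|)
        MeasureTheory.volume 0 t := (hIeXt.sub hIeYt).abs
    have hptt : ∀ x ∈ Set.Icc (0:ℝ) t,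
        |Real.exp (X x) - Real.exp (Y x)| ≤ Real.exp (M + D) * |X x - Y x| :=
      fun x hx => hpt x ⟨hx.1, hx.2.trans ht1⟩
    calc |At - Bt| = |∫ s in (0:ℝ)..t, (Real.exp (X s) - Real.exp (Y s))| := by
          rw [intervalIntegral.integral_sub hIeXt hIeYt]
      _ ≤ ∫ s in (0:ℝ)..t, |Real.exp (X s) - Real.exp (Y s)| :=
          intervalIntegral.abs_integral_le_integral_abs ht0
      _ ≤ ∫ s in (0:ℝ)..t, Real.exp (M + D) * |X s - Y s| :=
          intervalIntegral.integral_mono_on ht0 habsintt ((hIabs.mono_set hsub).const_mul _) hptt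
      _ ≤ ∫ s in (0:ℝ)..1, Real.exp (M + D) * |X s - Y s| :=
          intervalIntegral.integral_mono_interval le_rfl ht0 ht1
            (Filter.Eventually.of_forall fun x =>
              mul_nonneg (Real.exp_pos _).le (abs_nonneg _)) (hIabs.const_mul _)
      _ = Real.exp (M + D) * ∫ s in (0:ℝ)..1, |X s - Y s| :=
          intervalIntegral.integral_const_mul _ _
      _ ≤ Real.exp (M + D) * J := mul_le_mul_of_nonneg_left hJle (Real.exp_pos _).le
  -- combine
  have hsplit : θX⁻¹ * At - θY⁻¹ * Bt = θX⁻¹ * (At - Bt) + (θX⁻¹ - θY⁻¹) * Bt := by ring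
  have hinvdiff : |θX⁻¹ - θY⁻¹| = θX⁻¹ * θY⁻¹ * |θX - θY| := by
    rw [abs_sub_comm θX θY, ← abs_of_pos (mul_pos (inv_pos.2 hθXpos) (inv_pos.2 hθYpos)),
      ← abs_mul]
    congr 1
    field_simp
  have hb1 : |θX⁻¹ * (At - Bt)| ≤ Real.exp M * (Real.exp (M + D) * J) := by
    rw [abs_mul, abs_of_pos (inv_pos.2 hθXpos)]
    exact mul_le_mul part1 hAB (abs_nonneg _) (Real.exp_pos _).le
  have hb2 : |(θX⁻¹ - θY⁻¹) * Bt| ≤ Real.exp M * (Real.exp (M + D) * J) := by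
    rw [abs_mul, hinvdiff, abs_of_nonneg hBt0]
    calc θX⁻¹ * θY⁻¹ * |θX - θY| * Bt ≤ θX⁻¹ * θY⁻¹ * |θX - θY| * θY := by
          apply mul_le_mul_of_nonneg_left hBtle
          positivity
      _ = θX⁻¹ * |θX - θY| := by field_simp
      _ ≤ Real.exp M * (Real.exp (M + D) * J) :=
          mul_le_mul part1 part2 (abs_nonneg _) (Real.exp_pos _).le
  have hexp : Real.exp M * (Real.exp (M + D) * J) = Real.exp (2 * M + D) * J := by
    rw [← mul_assoc, ← Real.exp_add, show M + (M + D) = 2 * M + D by ring]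
  calc |θX⁻¹ * At - θY⁻¹ * Bt|
      ≤ |θX⁻¹ * (At - Bt)| + |(θX⁻¹ - θY⁻¹) * Bt| := by rw [hsplit]; exact abs_add_le _ _
    _ ≤ Real.exp M * (Real.exp (M + D) * J) + Real.exp M * (Real.exp (M + D) * J) :=
        add_le_add hb1 hb2
    _ = 2 * Real.exp (2 * M + D) * J := by rw [hexp]; ring
end

section
/- The Wasserstein distance between densities obtained via the inverse log quantile density transformation satisfies d_W(ψ_Q^{-1}(X), ψ_Q^{-1}(Y)) ≤ 2 e^{4‖X‖_∞} e^{2 d_∞(X,Y)} d₂(X,Y) for continuous X, Y on [0,1]. -/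
open intervalIntegral Set

lemma cs_helper (g : ℝ → ℝ) (hg : ContinuousOn g (Set.Icc 0 1)) :
    (∫ s in (0:ℝ)..1, |g s|) ^ 2 ≤ ∫ s in (0:ℝ)..1, g s ^ 2 := by
  have h01 : (0:ℝ) ≤ 1 := by norm_num
  have hu : Set.uIcc (0:ℝ) 1 = Set.Icc 0 1 := Set.uIcc_of_le h01
  have hgi : IntervalIntegrable g MeasureTheory.volume 0 1 :=
    (hu ▸ hg).intervalIntegrable
  set I := ∫ s in (0:ℝ)..1, |g s| with hI
  have habs : IntervalIntegrable (fun s => |g s|) MeasureTheory.volume 0 1 := hgi.abs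
  have hsq : IntervalIntegrable (fun s => g s ^ 2) MeasureTheory.volume 0 1 :=
    ((hu ▸ hg).pow 2).intervalIntegrable
  have key : 0 ≤ ∫ s in (0:ℝ)..1, (|g s| - I) ^ 2 :=
    intervalIntegral.integral_nonneg h01 (fun u _ => sq_nonneg _)
  have hexp : (fun s => (|g s| - I) ^ 2) = fun s => (g s ^ 2 - (2 * I) * |g s|) + I ^ 2 := by
    funext s; rw [sub_sq, sq_abs]; ring
  rw [hexp] at key
  rw [intervalIntegral.integral_add (hsq.sub (habs.const_mul _)) intervalIntegrable_const,
    intervalIntegral.integral_sub hsq (habs.const_mul _),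
    intervalIntegral.integral_const_mul, intervalIntegral.integral_const] at key
  simp only [← hI, sub_zero, one_smul, smul_eq_mul] at key
  nlinarith [key]

lemma exp_lip (a b c : ℝ) (ha : a ≤ c) (hb : b ≤ c) :
    |Real.exp a - Real.exp b| ≤ Real.exp c * |a - b| := by
  wlog hab : b ≤ a generalizing a b
  · rw [abs_sub_comm, abs_sub_comm a b]; exact this b a hb ha (le_of_not_ge hab)
  rw [abs_of_nonneg (sub_nonneg.2 (Real.exp_le_exp.2 hab)), abs_of_nonneg (sub_nonneg.2 hab)]
  have h2 : Real.exp a * Real.exp (b - a) = Real.exp b := by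
    rw [← Real.exp_add]; ring_nf
  have key : Real.exp a - Real.exp b ≤ Real.exp a * (a - b) := by
    nlinarith [Real.add_one_le_exp (b - a), Real.exp_pos a]
  have : Real.exp a * (a - b) ≤ Real.exp c * (a - b) :=
    mul_le_mul_of_nonneg_right (Real.exp_le_exp.2 ha) (sub_nonneg.2 hab)
  linarith


open intervalIntegral Set

/-- Wasserstein bound for the inverse log quantile density transformation:
`d_W(ψ_Q⁻¹(X), ψ_Q⁻¹(Y)) ≤ 2 e^{4‖X‖_∞} e^{2 d_∞(X,Y)} d₂(X,Y)`, where the Wasserstein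
distance is the L² distance between the corresponding quantile functions. -/
theorem wasserstein_inverse_lqd_bound
    (X Y : ℝ → ℝ)
    (hX : ContinuousOn X (Set.Icc 0 1)) (hY : ContinuousOn Y (Set.Icc 0 1)) :
    (∫ t in (0:ℝ)..1,
        ((∫ s in (0:ℝ)..1, Real.exp (X s))⁻¹ * (∫ s in (0:ℝ)..t, Real.exp (X s)) -
          (∫ s in (0:ℝ)..1, Real.exp (Y s))⁻¹ * (∫ s in (0:ℝ)..t, Real.exp (Y s))) ^ 2) ^
        ((1:ℝ)/2) ≤
      2 * Real.exp (4 * ⨆ u : Set.Icc (0:ℝ) 1, |X u.1|) *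
        Real.exp (2 * ⨆ u : Set.Icc (0:ℝ) 1, |X u.1 - Y u.1|) *
        (∫ s in (0:ℝ)..1, (X s - Y s) ^ 2) ^ ((1:ℝ)/2) := by
  have h01 : (0:ℝ) ≤ 1 := by norm_num
  have hu : Set.uIcc (0:ℝ) 1 = Set.Icc 0 1 := Set.uIcc_of_le h01
  set M := ⨆ u : Set.Icc (0:ℝ) 1, |X u.1| with hMdef
  set D := ⨆ u : Set.Icc (0:ℝ) 1, |X u.1 - Y u.1| with hDdef
  -- bounds from the suprema
  have hbddX : BddAbove (Set.range fun u : Set.Icc (0:ℝ) 1 => |X u.1|) := by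
    obtain ⟨K, hK⟩ := (isCompact_Icc.image_of_continuousOn hX.abs).bddAbove
    exact ⟨K, by rintro y ⟨u, rfl⟩; exact hK ⟨u.1, u.2, rfl⟩⟩
  have hbddD : BddAbove (Set.range fun u : Set.Icc (0:ℝ) 1 => |X u.1 - Y u.1|) := by
    obtain ⟨K, hK⟩ := (isCompact_Icc.image_of_continuousOn (hX.sub hY).abs).bddAbove
    exact ⟨K, by rintro y ⟨u, rfl⟩; exact hK ⟨u.1, u.2, rfl⟩⟩
  have hM : ∀ s ∈ Set.Icc (0:ℝ) 1, |X s| ≤ M := fun s hs => le_ciSup hbddX ⟨s, hs⟩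
  have hD : ∀ s ∈ Set.Icc (0:ℝ) 1, |X s - Y s| ≤ D := fun s hs => le_ciSup hbddD ⟨s, hs⟩
  have h0mem : (0:ℝ) ∈ Set.Icc (0:ℝ) 1 := ⟨le_rfl, h01⟩
  have hM0 : 0 ≤ M := le_trans (abs_nonneg _) (hM 0 h0mem)
  have hD0 : 0 ≤ D := le_trans (abs_nonneg _) (hD 0 h0mem)
  have hYb : ∀ s ∈ Set.Icc (0:ℝ) 1, |Y s| ≤ M + D := by
    intro s hs
    have : |Y s| ≤ |X s| + |X s - Y s| := by
      have := abs_sub_abs_le_abs_sub (X s) (Y s); have := abs_nonneg (X s - Y s)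
      calc |Y s| = |X s - (X s - Y s)| := by ring_nf
        _ ≤ |X s| + |X s - Y s| := abs_sub _ _
    exact this.trans (add_le_add (hM s hs) (hD s hs))
  -- continuity and integrability of exponentials
  have hEX : ContinuousOn (fun s => Real.exp (X s)) (Set.Icc 0 1) :=
    Real.continuous_exp.comp_continuousOn hX
  have hEY : ContinuousOn (fun s => Real.exp (Y s)) (Set.Icc 0 1) :=
    Real.continuous_exp.comp_continuousOn hY
  have iEX : IntervalIntegrable (fun s => Real.exp (X s)) MeasureTheory.volume 0 1 :=
    (hu ▸ hEX).intervalIntegrable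
  have iEY : IntervalIntegrable (fun s => Real.exp (Y s)) MeasureTheory.volume 0 1 :=
    (hu ▸ hEY).intervalIntegrable
  have iDiff : IntervalIntegrable (fun s => Real.exp (X s) - Real.exp (Y s))
      MeasureTheory.volume 0 1 := iEX.sub iEY
  have iAbsDiff : IntervalIntegrable (fun s => |Real.exp (X s) - Real.exp (Y s)|)
      MeasureTheory.volume 0 1 := iDiff.abs
  set θX := ∫ s in (0:ℝ)..1, Real.exp (X s) with hθXdef
  set θY := ∫ s in (0:ℝ)..1, Real.exp (Y s) with hθYdef
  have hθXlow : Real.exp (-M) ≤ θX := by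
    have := intervalIntegral.integral_mono_on h01 intervalIntegrable_const iEX
      (fun s hs => Real.exp_le_exp.2 (neg_le_of_abs_le (hM s hs)))
    simpa using this
  have hθX : 0 < θX := lt_of_lt_of_le (Real.exp_pos _) hθXlow
  have hθYlow : Real.exp (-(M + D)) ≤ θY := by
    have := intervalIntegral.integral_mono_on h01 intervalIntegrable_const iEY
      (fun s hs => Real.exp_le_exp.2 (neg_le_of_abs_le (hYb s hs)))
    simpa using this
  have hθY : 0 < θY := lt_of_lt_of_le (Real.exp_pos _) hθYlow
  set E := ∫ s in (0:ℝ)..1, |Real.exp (X s) - Real.exp (Y s)| with hEdef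
  have hE0 : 0 ≤ E :=
    intervalIntegral.integral_nonneg h01 (fun s _ => abs_nonneg _)
  set I := ∫ s in (0:ℝ)..1, |X s - Y s| with hIdef
  have hI0 : 0 ≤ I := intervalIntegral.integral_nonneg h01 (fun s _ => abs_nonneg _)
  have iAbsXY : IntervalIntegrable (fun s => |X s - Y s|) MeasureTheory.volume 0 1 :=
    ((hu ▸ (hX.sub hY)).intervalIntegrable).abs
  have hE : E ≤ Real.exp (M + D) * I := by
    have h1 : E ≤ ∫ s in (0:ℝ)..1, Real.exp (M + D) * |X s - Y s| := by
      refine intervalIntegral.integral_mono_on h01 iAbsDiff (iAbsXY.const_mul _) ?_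
      intro s hs
      refine exp_lip (X s) (Y s) (M + D) ?_ ?_
      · exact le_trans (le_abs_self _) (le_trans (hM s hs) (by linarith))
      · exact le_trans (le_abs_self _) (hYb s hs)
    rwa [intervalIntegral.integral_const_mul] at h1
  -- the constant C bounding the integrand pointwise
  set C := 2 * Real.exp M * E with hCdef
  have hC0 : 0 ≤ C := by positivity
  have hθXinv : θX⁻¹ ≤ Real.exp M := by
    rw [show Real.exp M = (Real.exp (-M))⁻¹ by rw [Real.exp_neg, inv_inv]]
    exact inv_anti₀ (Real.exp_pos _) hθXlow
  -- pointwise bound on the quantile difference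
  have hpoint : ∀ t ∈ Set.Icc (0:ℝ) 1,
      |θX⁻¹ * (∫ s in (0:ℝ)..t, Real.exp (X s)) -
        θY⁻¹ * (∫ s in (0:ℝ)..t, Real.exp (Y s))| ≤ C := by
    intro t ht
    set A := ∫ s in (0:ℝ)..t, Real.exp (X s) with hAdef
    set B := ∫ s in (0:ℝ)..t, Real.exp (Y s) with hBdef
    have hsub : Set.uIcc (0:ℝ) t ⊆ Set.uIcc (0:ℝ) 1 :=
      Set.uIcc_subset_uIcc Set.left_mem_uIcc (by rw [hu]; exact ht)
    have iEXt : IntervalIntegrable (fun s => Real.exp (X s)) MeasureTheory.volume 0 t :=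
      iEX.mono_set hsub
    have iEYt : IntervalIntegrable (fun s => Real.exp (Y s)) MeasureTheory.volume 0 t :=
      iEY.mono_set hsub
    have hsub' : Set.uIcc t 1 ⊆ Set.uIcc (0:ℝ) 1 :=
      Set.uIcc_subset_uIcc (by rw [hu]; exact ht) Set.right_mem_uIcc
    have iEXt' : IntervalIntegrable (fun s => Real.exp (X s)) MeasureTheory.volume t 1 :=
      iEX.mono_set hsub'
    have iEYt' : IntervalIntegrable (fun s => Real.exp (Y s)) MeasureTheory.volume t 1 :=
      iEY.mono_set hsub'
    have iADt : IntervalIntegrable (fun s => |Real.exp (X s) - Real.exp (Y s)|)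
        MeasureTheory.volume 0 t := iAbsDiff.mono_set hsub
    have iADt' : IntervalIntegrable (fun s => |Real.exp (X s) - Real.exp (Y s)|)
        MeasureTheory.volume t 1 := iAbsDiff.mono_set hsub'
    -- |A - B| ≤ E
    have hAB : |A - B| ≤ E := by
      have h1 : A - B = ∫ s in (0:ℝ)..t, (Real.exp (X s) - Real.exp (Y s)) :=
        (intervalIntegral.integral_sub iEXt iEYt).symm
      have h2 : |∫ s in (0:ℝ)..t, (Real.exp (X s) - Real.exp (Y s))| ≤
          ∫ s in (0:ℝ)..t, |Real.exp (X s) - Real.exp (Y s)| :=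
        intervalIntegral.abs_integral_le_integral_abs ht.1
      have h3 : (∫ s in (0:ℝ)..t, |Real.exp (X s) - Real.exp (Y s)|) ≤ E := by
        have hadd := intervalIntegral.integral_add_adjacent_intervals iADt iADt'
        have hnn : 0 ≤ ∫ s in t..1, |Real.exp (X s) - Real.exp (Y s)| :=
          intervalIntegral.integral_nonneg ht.2 (fun s _ => abs_nonneg _)
        rw [hEdef, ← hadd]; linarith
      rw [h1]; exact h2.trans h3
    have hθdiff : |θY - θX| ≤ E := by
      have h1 : θY - θX = ∫ s in (0:ℝ)..1, (Real.exp (Y s) - Real.exp (X s)) :=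
        (intervalIntegral.integral_sub iEY iEX).symm
      have h2 : |∫ s in (0:ℝ)..1, (Real.exp (Y s) - Real.exp (X s))| ≤
          ∫ s in (0:ℝ)..1, |Real.exp (Y s) - Real.exp (X s)| :=
        intervalIntegral.abs_integral_le_integral_abs h01
      have h3 : (fun s => |Real.exp (Y s) - Real.exp (X s)|) =
          fun s => |Real.exp (X s) - Real.exp (Y s)| := by
        funext s; rw [abs_sub_comm]
      rw [h1]; rw [h3] at h2; exact h2
    have hB0 : 0 ≤ B := by
      rw [hBdef]
      exact intervalIntegral.integral_nonneg ht.1 (fun s _ => (Real.exp_pos _).le)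
    have hBθ : B ≤ θY := by
      have hadd := intervalIntegral.integral_add_adjacent_intervals iEYt iEYt'
      have hnn : 0 ≤ ∫ s in t..1, Real.exp (Y s) :=
        intervalIntegral.integral_nonneg ht.2 (fun s _ => (Real.exp_pos _).le)
      rw [hθYdef, ← hadd]; rw [hBdef]; linarith
    -- decomposition
    have hdec : θX⁻¹ * A - θY⁻¹ * B =
        θX⁻¹ * (A - B) + θX⁻¹ * θY⁻¹ * (θY - θX) * B := by
      field_simp
      ring
    have hθXi0 : 0 ≤ θX⁻¹ := (inv_nonneg).2 hθX.le
    have h1 : |θX⁻¹ * (A - B)| ≤ θX⁻¹ * E := by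
      rw [abs_mul, abs_of_nonneg hθXi0]
      exact mul_le_mul_of_nonneg_left hAB hθXi0
    have h2 : |θX⁻¹ * θY⁻¹ * (θY - θX) * B| ≤ θX⁻¹ * E := by
      rw [abs_mul, abs_mul, abs_of_nonneg (by positivity : (0:ℝ) ≤ θX⁻¹ * θY⁻¹),
        abs_of_nonneg hB0]
      have step : θX⁻¹ * θY⁻¹ * |θY - θX| * B ≤ θX⁻¹ * θY⁻¹ * E * θY := by
        gcongr
      have heq : θX⁻¹ * θY⁻¹ * E * θY = θX⁻¹ * E := by
        field_simp
      linarith [step, heq ▸ step]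
    calc |θX⁻¹ * A - θY⁻¹ * B|
        = |θX⁻¹ * (A - B) + θX⁻¹ * θY⁻¹ * (θY - θX) * B| := by rw [hdec]
      _ ≤ |θX⁻¹ * (A - B)| + |θX⁻¹ * θY⁻¹ * (θY - θX) * B| := abs_add_le _ _
      _ ≤ θX⁻¹ * E + θX⁻¹ * E := add_le_add h1 h2
      _ = 2 * θX⁻¹ * E := by ring
      _ ≤ 2 * Real.exp M * E := by gcongr
  -- continuity of the quantile difference, integrability of its square
  have hAcont : ContinuousOn (fun t => ∫ s in (0:ℝ)..t, Real.exp (X s)) (Set.Icc 0 1) := by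
    have := intervalIntegral.continuousOn_primitive_interval
      (f := fun s => Real.exp (X s)) (μ := MeasureTheory.volume) (a := 0) (b := 1)
      (by rw [hu]; exact hEX.integrableOn_compact isCompact_Icc)
    rwa [hu] at this
  have hBcont : ContinuousOn (fun t => ∫ s in (0:ℝ)..t, Real.exp (Y s)) (Set.Icc 0 1) := by
    have := intervalIntegral.continuousOn_primitive_interval
      (f := fun s => Real.exp (Y s)) (μ := MeasureTheory.volume) (a := 0) (b := 1)
      (by rw [hu]; exact hEY.integrableOn_compact isCompact_Icc)
    rwa [hu] at this
  have hΔcont : ContinuousOn (fun t => θX⁻¹ * (∫ s in (0:ℝ)..t, Real.exp (X s)) -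
      θY⁻¹ * (∫ s in (0:ℝ)..t, Real.exp (Y s))) (Set.Icc 0 1) :=
    (continuousOn_const.mul hAcont).sub (continuousOn_const.mul hBcont)
  have iΔsq : IntervalIntegrable (fun t => (θX⁻¹ * (∫ s in (0:ℝ)..t, Real.exp (X s)) -
      θY⁻¹ * (∫ s in (0:ℝ)..t, Real.exp (Y s))) ^ 2) MeasureTheory.volume 0 1 :=
    (hu ▸ (hΔcont.pow 2)).intervalIntegrable
  -- integral bound
  have hintbound : (∫ t in (0:ℝ)..1,
      (θX⁻¹ * (∫ s in (0:ℝ)..t, Real.exp (X s)) -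
        θY⁻¹ * (∫ s in (0:ℝ)..t, Real.exp (Y s))) ^ 2) ≤ C ^ 2 := by
    have h1 : (∫ t in (0:ℝ)..1,
        (θX⁻¹ * (∫ s in (0:ℝ)..t, Real.exp (X s)) -
          θY⁻¹ * (∫ s in (0:ℝ)..t, Real.exp (Y s))) ^ 2) ≤
        ∫ t in (0:ℝ)..1, C ^ 2 := by
      refine intervalIntegral.integral_mono_on h01 iΔsq intervalIntegrable_const ?_
      intro t ht
      rw [← sq_abs]
      exact pow_le_pow_left₀ (abs_nonneg _) (hpoint t ht) 2
    simpa using h1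
  have hΔint0 : 0 ≤ ∫ t in (0:ℝ)..1,
      (θX⁻¹ * (∫ s in (0:ℝ)..t, Real.exp (X s)) -
        θY⁻¹ * (∫ s in (0:ℝ)..t, Real.exp (Y s))) ^ 2 :=
    intervalIntegral.integral_nonneg h01 (fun t _ => sq_nonneg _)
  -- Cauchy-Schwarz: I ≤ J
  set J := (∫ s in (0:ℝ)..1, (X s - Y s) ^ 2) ^ ((1:ℝ)/2) with hJdef
  have hXY2 : 0 ≤ ∫ s in (0:ℝ)..1, (X s - Y s) ^ 2 :=
    intervalIntegral.integral_nonneg h01 (fun t _ => sq_nonneg _)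
  have hJ0 : 0 ≤ J := Real.rpow_nonneg hXY2 _
  have hIJ : I ≤ J := by
    have hcs : I ^ 2 ≤ ∫ s in (0:ℝ)..1, (X s - Y s) ^ 2 := cs_helper _ (hX.sub hY)
    have : (I ^ 2 : ℝ) ^ ((1:ℝ)/2) ≤ J :=
      Real.rpow_le_rpow (sq_nonneg _) hcs (by norm_num)
    rwa [show (I ^ 2 : ℝ) ^ ((1:ℝ)/2) = I by
      rw [← Real.rpow_natCast I 2, ← Real.rpow_mul hI0]; norm_num] at this
  -- final chain
  calc (∫ t in (0:ℝ)..1,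
        (θX⁻¹ * (∫ s in (0:ℝ)..t, Real.exp (X s)) -
          θY⁻¹ * (∫ s in (0:ℝ)..t, Real.exp (Y s))) ^ 2) ^ ((1:ℝ)/2)
      ≤ (C ^ 2 : ℝ) ^ ((1:ℝ)/2) := Real.rpow_le_rpow hΔint0 hintbound (by norm_num)
    _ = C := by rw [← Real.rpow_natCast C 2, ← Real.rpow_mul hC0]; norm_num
    _ ≤ 2 * Real.exp M * (Real.exp (M + D) * I) :=
        mul_le_mul_of_nonneg_left hE (by positivity)
    _ = 2 * Real.exp (M + (M + D)) * I := by rw [Real.exp_add M (M + D)]; ring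
    _ ≤ 2 * Real.exp (M + (M + D)) * J :=
        mul_le_mul_of_nonneg_left hIJ (by positivity)
    _ ≤ 2 * Real.exp (4 * M + 2 * D) * J := by
        refine mul_le_mul_of_nonneg_right ?_ hJ0
        refine mul_le_mul_of_nonneg_left ?_ (by norm_num)
        exact Real.exp_le_exp.2 (by linarith)
    _ = 2 * Real.exp (4 * M) * Real.exp (2 * D) * J := by rw [Real.exp_add (4 * M) (2 * D)]; ring
end
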